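/- A binary word f is tilde-isometric if and only if its reversal f^rev is tilde-isometric. -/

import Mathlib

/-- Edit operations on binary words: `R i` flips the bit at position `i`,
`S i` swaps the (distinct) bits at positions `i` and `i+1`. Positions are 0-based. -/
inductive TOp where
  | R (i : ℕ)
  | S (i : ℕ)
deriving DecidableEq

namespace TOp

def apply : TOp → List Bool → List Bool
  | R i, w => w.set i (!(w.getD i false))
  | S i, w => (w.set i (w.getD (i+1) false)).set (i+1) (w.getD i false)

def valid : TOp → List Bool → Prop
  | R i, w => i < w.length
  | S i, w => i + 1 < w.length ∧ w.getD i false ≠ w.getD (i+1) false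

/-- The set of positions modified by an operation. -/
def positions : TOp → Finset ℕ
  | R i => {i}
  | S i => {i, i+1}

/-- The (leftmost) position of an operation. -/
def pos : TOp → ℕ
  | R i => i
  | S i => i

def isR : TOp → Prop
  | R _ => True
  | S _ => False

def isS : TOp → Prop
  | R _ => False
  | S _ => True

end TOp

/-- All operations of a sequence are valid when applied successively starting from `w`. -/
def validSeq : List TOp → List Bool → Prop
  | [], _ => True
  | o :: os, w => o.valid w ∧ validSeq os (o.apply w)

def applySeq : List TOp → List Bool → List Bool
  | [], w => w
  | o :: os, w => applySeq os (o.apply w)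

/-- `ops` is a tilde-transformation from `u` to `v`. -/
def Transforms (ops : List TOp) (u v : List Bool) : Prop :=
  validSeq ops u ∧ applySeq ops u = v

/-- The swap-mismatch (tilde) distance between two words. -/
noncomputable def tdist (u v : List Bool) : ℕ :=
  sInf { n | ∃ ops : List TOp, ops.length = n ∧ Transforms ops u v }

/-- Each position of the word is modified at most once along the sequence. -/
def eachPosOnce (ops : List TOp) : Prop :=
  ops.Pairwise fun o o' => Disjoint o.positions o'.positions

/-- A minimal tilde-transformation: length `tdist u v`, each position changed at most once. -/
def MinimalTransf (ops : List TOp) (u v : List Bool) : Prop :=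
  Transforms ops u v ∧ ops.length = tdist u v ∧ eachPosOnce ops

/-- The list of all words `w_0 = u, w_1, …, w_h` visited by the transformation. -/
def trajectory (ops : List TOp) (u : List Bool) : List (List Bool) :=
  List.scanl (fun w o => o.apply w) u ops

/-- `w` avoids `f` as a factor. -/
def FFree (f w : List Bool) : Prop := ¬ f <:+: w

/-- All words along the transformation are `f`-free. -/
def FreeTransf (f : List Bool) (ops : List TOp) (u : List Bool) : Prop :=
  ∀ w ∈ trajectory ops u, FFree f w

/-- `f` is tilde-isometric. -/
def TildeIsometric (f : List Bool) : Prop :=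
  ∀ u v : List Bool, u.length = v.length → f.length < u.length →
    FFree f u → FFree f v →
      ∃ ops : List TOp, MinimalTransf ops u v ∧ FreeTransf f ops u

/-- `(u,v)` is a pair of tilde-witnesses for `f`. -/
def Witnesses (f u v : List Bool) : Prop :=
  u.length = v.length ∧ FFree f u ∧ FFree f v ∧ 2 ≤ tdist u v ∧
    ∀ ops : List TOp, MinimalTransf ops u v → ¬ FreeTransf f ops u

/-- Hamming distance between equal-length words (number of mismatch positions). -/
def hdist (u v : List Bool) : ℕ := ((u.zip v).filter fun p => p.1 != p.2).length


def oprev (n : ℕ) : TOp → TOp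
  | .R i => .R (n - 1 - i)
  | .S i => .S (n - 2 - i)

lemma apply_length (o : TOp) (w : List Bool) : (o.apply w).length = w.length := by
  cases o <;> simp [TOp.apply]

lemma reverse_set (l : List Bool) (i : ℕ) (a : Bool) (h : i < l.length) :
    (l.set i a).reverse = l.reverse.set (l.length - 1 - i) a := by
  apply List.ext_getElem (by simp)
  intro j h1 h2
  have hj : j < l.length := by simpa using h2
  simp only [List.getElem_reverse, List.getElem_set, List.length_set, List.length_reverse]
  by_cases hc : i = l.length - 1 - j
  · rw [if_pos hc, if_pos (by omega)]
  · rw [if_neg hc, if_neg (by omega)]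

lemma getD_rev (l : List Bool) (i : ℕ) (h : i < l.length) :
    l.reverse.getD (l.length - 1 - i) false = l.getD i false := by
  rw [List.getD_eq_getElem _ _ (by simp; omega), List.getD_eq_getElem _ _ h,
    List.getElem_reverse]
  have : l.length - 1 - (l.length - 1 - i) = i := by omega
  simp [this]

lemma apply_oprev (o : TOp) (w : List Bool) (hv : o.valid w) :
    (oprev w.length o).apply w.reverse = (o.apply w).reverse := by
  cases o with
  | R i =>
    have hi : i < w.length := hv
    simp only [oprev, TOp.apply]
    rw [reverse_set _ _ _ hi, getD_rev _ _ hi]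
  | S i =>
    obtain ⟨hi, hne⟩ := hv
    have hi' : i < w.length := by omega
    simp only [oprev, TOp.apply]
    have h1 : w.length - 2 - i + 1 = w.length - 1 - i := by omega
    have h2 : w.length - 1 - (i + 1) = w.length - 2 - i := by omega
    rw [h1, getD_rev _ _ hi', ← h2, getD_rev _ _ hi,
      reverse_set _ _ _ (by simp [hi]), reverse_set _ _ _ hi']
    simp only [List.length_set, h2]
    rw [List.set_comm _ _ (by omega)]

lemma valid_oprev (o : TOp) (w : List Bool) (hv : o.valid w) :
    (oprev w.length o).valid w.reverse := by
  cases o with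
  | R i =>
    have hi : i < w.length := hv
    simp only [oprev, TOp.valid, List.length_reverse]
    omega
  | S i =>
    obtain ⟨hi, hne⟩ := hv
    have hi' : i < w.length := by omega
    have h1 : w.length - 2 - i + 1 = w.length - 1 - i := by omega
    have h2 : w.length - 1 - (i + 1) = w.length - 2 - i := by omega
    refine ⟨by simp only [List.length_reverse]; omega, ?_⟩
    rw [h1, getD_rev _ _ hi', ← h2, getD_rev _ _ hi]
    exact fun h => hne h.symm

lemma transforms_oprev (ops : List TOp) (w : List Bool) (hv : validSeq ops w) :
    validSeq (ops.map (oprev w.length)) w.reverse ∧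
    applySeq (ops.map (oprev w.length)) w.reverse = (applySeq ops w).reverse := by
  induction ops generalizing w with
  | nil => exact ⟨trivial, rfl⟩
  | cons o os ih =>
    obtain ⟨h1, h2⟩ := hv
    have ihh := ih (o.apply w) h2
    rw [apply_length] at ihh
    constructor
    · exact ⟨valid_oprev o w h1, by rw [apply_oprev o w h1]; exact ihh.1⟩
    · show applySeq (os.map (oprev w.length)) ((oprev w.length o).apply w.reverse) = _
      rw [apply_oprev o w h1]
      exact ihh.2

lemma pos_lt (o : TOp) (w : List Bool) (hv : o.valid w) :
    ∀ j ∈ o.positions, j < w.length := by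
  cases o with
  | R i => intro j hj; simp [TOp.positions] at hj; simp [TOp.valid] at hv; omega
  | S i => intro j hj; simp [TOp.positions] at hj; obtain ⟨h, -⟩ := hv; omega

lemma bound_all (ops : List TOp) (w : List Bool) (hv : validSeq ops w) :
    ∀ o ∈ ops, ∀ j ∈ o.positions, j < w.length := by
  induction ops generalizing w with
  | nil => intro o ho; simp at ho
  | cons o os ih =>
    obtain ⟨h1, h2⟩ := hv
    intro o' ho'
    rcases List.mem_cons.mp ho' with rfl | ho'
    · exact pos_lt o' w h1
    · have := ih (o.apply w) h2 o' ho'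
      rwa [apply_length] at this

lemma disj_oprev {n : ℕ} {o o' : TOp}
    (h : ∀ j ∈ o.positions, j < n) (h' : ∀ j ∈ o'.positions, j < n)
    (hd : Disjoint o.positions o'.positions) :
    Disjoint (oprev n o).positions (oprev n o').positions := by
  cases o <;> cases o' <;>
    simp only [oprev, TOp.positions, Finset.disjoint_left, Finset.mem_insert,
      Finset.mem_singleton, forall_eq_or_imp, forall_eq, not_or] at * <;>
    omega

lemma each_oprev (ops : List TOp) (w : List Bool) (hv : validSeq ops w)
    (h : eachPosOnce ops) : eachPosOnce (ops.map (oprev w.length)) := by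
  rw [eachPosOnce, List.pairwise_map]
  have hb := bound_all ops w hv
  exact h.imp_of_mem (fun ha hb' hd => disj_oprev (hb _ ha) (hb _ hb') hd)

lemma tdist_reverse (u v : List Bool) : tdist u.reverse v.reverse = tdist u v := by
  unfold tdist
  congr 1
  ext n
  constructor
  · rintro ⟨ops, hl, hv, ha⟩
    have h := transforms_oprev ops u.reverse hv
    simp only [List.length_reverse, List.reverse_reverse] at h
    exact ⟨ops.map (oprev u.length), by simp [hl], h.1,
      by rw [h.2, ha, List.reverse_reverse]⟩
  · rintro ⟨ops, hl, hv, ha⟩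
    have h := transforms_oprev ops u hv
    exact ⟨ops.map (oprev u.length), by simp [hl], h.1, by rw [h.2, ha]⟩

lemma trajectory_oprev (ops : List TOp) (w : List Bool) (hv : validSeq ops w) :
    trajectory (ops.map (oprev w.length)) w.reverse
      = (trajectory ops w).map List.reverse := by
  induction ops generalizing w with
  | nil => simp [trajectory]
  | cons o os ih =>
    obtain ⟨h1, h2⟩ := hv
    have ihh := ih (o.apply w) h2
    rw [apply_length] at ihh
    simp only [trajectory, List.map_cons, List.scanl_cons] at *
    rw [apply_oprev o w h1, ihh]

lemma ffree_reverse (f w : List Bool) : FFree f.reverse w.reverse ↔ FFree f w := by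
  unfold FFree
  rw [List.reverse_infix]

lemma key {f : List Bool} (hf : TildeIsometric f) : TildeIsometric f.reverse := by
  intro u v hlen hflen hu hv
  have hu' : FFree f u.reverse := by
    rw [← ffree_reverse]; simpa using hu
  have hv' : FFree f v.reverse := by
    rw [← ffree_reverse]; simpa using hv
  obtain ⟨ops, ⟨hT, hlen2, hE⟩, hFree⟩ :=
    hf u.reverse v.reverse (by simp [hlen]) (by simpa using hflen) hu' hv'
  have htr := transforms_oprev ops u.reverse hT.1
  simp only [List.length_reverse, List.reverse_reverse] at htr
  refine ⟨ops.map (oprev u.length), ⟨⟨htr.1, by rw [htr.2, hT.2, List.reverse_reverse]⟩,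
    ?_, ?_⟩, ?_⟩
  · rw [List.length_map, hlen2, tdist_reverse]
  · have := each_oprev ops u.reverse hT.1 hE
    simpa using this
  · intro x hx
    have htj := trajectory_oprev ops u.reverse hT.1
    simp only [List.length_reverse, List.reverse_reverse] at htj
    rw [htj] at hx
    obtain ⟨y, hy, rfl⟩ := List.mem_map.mp hx
    exact (ffree_reverse f y).mpr (hFree y hy)

theorem stmt2 (f : List Bool) : TildeIsometric f ↔ TildeIsometric f.reverse := by
  exact ⟨key, fun h => by simpa using key h⟩
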